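/- Let (K, t, c, λ) be a weak mixed distributive law in Cat with splitting Θ = σ ∘ π, π ∘ σ = 1_a of the canonical idempotent Θ on tc. Define γ : a ⟶ ca as γ = (c ◁ π) ∘ (λ ▷ c) ∘ (t ◁ δ) ∘ σ. Then γ is a coaction of the comonad c on a: (ε ▷ a) ∘ γ = id_a and (δ ▷ a) ∘ γ = (c ◁ γ) ∘ γ. -/
import Mathlib


open CategoryTheory

universe v₁ u₁ v₂ u₂

variable {K : Type u₁} [Category.{v₁} K]

/-- A weak mixed distributive law `λ : tc ⟶ ct` between a monad `t` and a comonad `c`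
on a category `K`, satisfying the four axioms of Böhm–Lack–Street, stated componentwise. -/
structure WeakMixedDistLaw (t : CategoryTheory.Monad K) (c : CategoryTheory.Comonad K) where
  l : (c.toFunctor ⋙ t.toFunctor) ⟶ (t.toFunctor ⋙ c.toFunctor)
  mul_compat : ∀ X : K, t.μ.app (c.obj X) ≫ l.app X =
    t.map (l.app X) ≫ l.app (t.obj X) ≫ c.map (t.μ.app X)
  comul_compat : ∀ X : K, t.map (c.δ.app X) ≫ l.app (c.obj X) ≫ c.map (l.app X) =
    l.app X ≫ c.δ.app (t.obj X)
  weak_unit : ∀ X : K, t.η.app (c.obj X) ≫ l.app X =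
    c.δ.app X ≫ c.map (t.η.app (c.obj X)) ≫ c.map (l.app X) ≫ c.map (c.ε.app (t.obj X))
  weak_counit : ∀ X : K, l.app X ≫ c.ε.app (t.obj X) =
    t.map (t.η.app (c.obj X)) ≫ t.map (l.app X) ≫ t.map (c.ε.app (t.obj X)) ≫ t.μ.app X

/-- Through a splitting of the canonical idempotent on tc, the 2-cell
γ = (c π) ∘ (λ c) ∘ (t δ) ∘ σ is a coaction of the comonad c on a. -/
theorem canonical_coaction (t : CategoryTheory.Monad K) (c : CategoryTheory.Comonad K)
    (W : WeakMixedDistLaw t c) (a : K ⥤ K) (π : (c.toFunctor ⋙ t.toFunctor) ⟶ a) (σ : a ⟶ (c.toFunctor ⋙ t.toFunctor))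
    (hsec : σ ≫ π = 𝟙 a)
    (hsplit : ∀ X : K, π.app X ≫ σ.app X =
      t.map (c.δ.app X) ≫ W.l.app (c.obj X) ≫ c.ε.app (t.obj (c.obj X))) :
    (∀ X : K, (σ.app X ≫ t.map (c.δ.app X) ≫ W.l.app (c.obj X) ≫ c.map (π.app X)) ≫
      c.ε.app (a.obj X) = 𝟙 (a.obj X)) ∧
    (∀ X : K, (σ.app X ≫ t.map (c.δ.app X) ≫ W.l.app (c.obj X) ≫ c.map (π.app X)) ≫
      c.δ.app (a.obj X) =
      (σ.app X ≫ t.map (c.δ.app X) ≫ W.l.app (c.obj X) ≫ c.map (π.app X)) ≫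
        c.map (σ.app X ≫ t.map (c.δ.app X) ≫ W.l.app (c.obj X) ≫ c.map (π.app X))) := by
  have key : ∀ X : K,
      (t.map (c.δ.app X) ≫ W.l.app (c.obj X) ≫ c.ε.app (t.obj (c.obj X))) ≫
        t.map (c.δ.app X) ≫ W.l.app (c.obj X) =
      t.map (c.δ.app X) ≫ W.l.app (c.obj X) := by
    intro X
    have h1 : c.ε.app (t.obj (c.obj X)) ≫ t.map (c.δ.app X) =
        c.map (t.map (c.δ.app X)) ≫ c.ε.app (t.obj (c.obj (c.obj X))) :=
      (c.ε.naturality (t.map (c.δ.app X))).symm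
    have h2 : c.ε.app (t.obj (c.obj (c.obj X))) ≫ W.l.app (c.obj X) =
        c.map (W.l.app (c.obj X)) ≫ c.ε.app (c.obj (t.obj (c.obj X))) :=
      (c.ε.naturality (W.l.app (c.obj X))).symm
    have h3 : W.l.app (c.obj X) ≫ c.map (t.map (c.δ.app X)) =
        t.map (c.map (c.δ.app X)) ≫ W.l.app (c.obj (c.obj X)) :=
      (W.l.naturality (c.δ.app X)).symm
    simp only [Category.assoc]
    slice_lhs 3 4 => rw [h1]
    slice_lhs 4 5 => rw [h2]
    slice_lhs 2 3 => rw [h3]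
    slice_lhs 1 2 => rw [← t.map_comp, c.coassoc, t.map_comp]
    slice_lhs 2 4 => rw [W.comul_compat (c.obj X)]
    slice_lhs 3 4 => rw [c.left_counit]
    simp
  constructor
  · intro X
    have hε : c.map (π.app X) ≫ c.ε.app (a.obj X) =
        c.ε.app (t.obj (c.obj X)) ≫ π.app X := c.ε.naturality (π.app X)
    have hc := congr_arg (fun (f : a ⟶ a) => f.app X) hsec
    simp only [NatTrans.comp_app, NatTrans.id_app] at hc
    calc (σ.app X ≫ t.map (c.δ.app X) ≫ W.l.app (c.obj X) ≫ c.map (π.app X)) ≫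
            c.ε.app (a.obj X)
        = σ.app X ≫ (t.map (c.δ.app X) ≫ W.l.app (c.obj X) ≫
            c.ε.app (t.obj (c.obj X))) ≫ π.app X := by
          simp only [Category.assoc]; rw [hε]
      _ = σ.app X ≫ (π.app X ≫ σ.app X) ≫ π.app X := by rw [hsplit X]
      _ = 𝟙 (a.obj X) := by
          simp only [Category.assoc]; rw [reassoc_of% hc, hc]
  · intro X
    have hδ : c.map (π.app X) ≫ c.δ.app (a.obj X) =
        c.δ.app (t.obj (c.obj X)) ≫ c.map (c.map (π.app X)) := c.δ.naturality (π.app X)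
    have h3 : t.map (c.map (c.δ.app X)) ≫ W.l.app (c.obj (c.obj X)) =
        W.l.app (c.obj X) ≫ c.map (t.map (c.δ.app X)) :=
      W.l.naturality (c.δ.app X)
    have keyr := reassoc_of% (key X)
    simp only [Category.assoc] at keyr ⊢
    -- left side
    slice_lhs 4 5 => rw [hδ]
    slice_lhs 3 4 => rw [← W.comul_compat (c.obj X)]
    slice_lhs 2 3 => rw [← t.map_comp, ← c.coassoc, t.map_comp]
    slice_lhs 3 4 => rw [h3]
    -- right side
    conv_rhs =>
      rw [← c.map_comp]
      rw [show π.app X ≫ σ.app X ≫ t.map (c.δ.app X) ≫ W.l.app (c.obj X) ≫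
          c.map (π.app X) = t.map (c.δ.app X) ≫ W.l.app (c.obj X) ≫ c.map (π.app X)
        from by rw [reassoc_of% (hsplit X)]; exact keyr _]
    simp only [Functor.map_comp, Category.assoc]
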